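/- A finitely generated group Γ is primitive if and only if it contains a proper prodense subgroup. More precisely: if Γ is finitely generated and Δ ≤ Γ is a proper prodense subgroup, then Δ is contained in a maximal proper subgroup M of Γ, and the action of Γ on Γ/M is faithful and primitive. -/

import Mathlib

open CompleteLattice in
lemma top_compact_of_fg {Γ : Type*} [Group Γ] (hfg : Group.FG Γ) :
    IsCompactElement (⊤ : Subgroup Γ) := by
  rw [isCompactElement_iff_le_of_directed_sSup_le]
  intro s hne hdir hle
  obtain ⟨S, hS⟩ := (Group.fg_iff).mp hfg
  obtain ⟨hScl, hSfin⟩ := hS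
  -- every element of Γ is in sSup s
  have hmem : ∀ g : Γ, g ∈ sSup s := fun g => hle (Subgroup.mem_top g)
  -- generators lie in members of s; use directedness to find one containing all
  have key : ∀ T : Set Γ, T.Finite → ∃ H ∈ s, ∀ g ∈ T, g ∈ H := by
    intro T hT
    refine Set.Finite.induction_on (motive := fun T _ => ∃ H ∈ s, ∀ g ∈ T, g ∈ H) T hT ?_ ?_
    · obtain ⟨H, hH⟩ := hne; exact ⟨H, hH, by simp⟩
    · intro a T _ _ ih
      obtain ⟨H, hHs, hH⟩ := ih
      have ha := hmem a
      rw [Subgroup.mem_sSup_of_directedOn hne hdir] at ha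
      obtain ⟨K, hKs, haK⟩ := ha
      obtain ⟨L, hLs, hHL, hKL⟩ := hdir H hHs K hKs
      exact ⟨L, hLs, fun g hg => by
        rcases Set.mem_insert_iff.mp hg with rfl | hg
        · exact hKL haK
        · exact hHL (hH g hg)⟩
  obtain ⟨H, hHs, hH⟩ := key S hSfin
  refine ⟨H, hHs, ?_⟩
  rw [← hScl]
  exact le_trans (le_of_eq rfl) ((Subgroup.closure_le H).mpr hH)

/-- If `Γ` is finitely generated and `Δ` is a proper prodense subgroup, then
`Δ` is contained in a maximal proper subgroup `M` with trivial normal core, so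
that the action of `Γ` on `Γ ⧸ M` is faithful and primitive. -/
theorem prodense_le_maximal_core_free
    (Γ : Type*) [Group Γ] (hfg : Group.FG Γ)
    (Δ : Subgroup Γ) (hΔtop : Δ ≠ ⊤)
    (hΔ : ∀ N : Subgroup Γ, N.Normal → N ≠ ⊥ → Δ ⊔ N = ⊤) :
    ∃ M : Subgroup Γ, Δ ≤ M ∧ IsCoatom M ∧ M.normalCore = ⊥ := by
  have hcoatomic : IsCoatomic (Subgroup Γ) :=
    CompleteLattice.coatomic_of_top_compact (top_compact_of_fg hfg)
  rcases hcoatomic.eq_top_or_exists_le_coatom Δ with h | ⟨M, hM, hle⟩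
  · exact absurd h hΔtop
  refine ⟨M, hle, hM, ?_⟩
  by_contra hcore
  have hnorm : (M.normalCore).Normal := Subgroup.normalCore_normal M
  have := hΔ M.normalCore hnorm hcore
  have hsub : Δ ⊔ M.normalCore ≤ M := sup_le hle (Subgroup.normalCore_le M)
  rw [this] at hsub
  exact hM.1 (top_le_iff.mp hsub)
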